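/- The metric space (W, d) with the almost-basic-convergence metric is not complete. -/
import Mathlib

open MeasureTheory Filter

/-- Right-continuity of a real function. -/
def RightCont (f : ℝ → ℝ) : Prop := ∀ x : ℝ, ContinuousWithinAt f (Set.Ici x) x

/-- The space `W` of right-continuous functions of bounded variation on `ℝ`
which vanish at `-∞`. -/
def MemW (f : ℝ → ℝ) : Prop :=
  RightCont f ∧ BoundedVariationOn f Set.univ ∧ Tendsto f atBot (nhds 0)

/-- The set of admissible `ε ≥ 0` in the definition of the metric `d`: there is a
constant `c` such that `|f - c - g| ≤ ε` on `[-1/ε, 1/ε]` outside a set of Lebesgue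
measure at most `ε` (with the convention `[-1/0, 1/0] = ℝ`). -/
def dSet (f g : ℝ → ℝ) : Set ℝ :=
  {ε : ℝ | 0 ≤ ε ∧ ∃ c : ℝ,
    volume {x : ℝ | x ∈ (if ε = 0 then Set.univ else Set.Icc (-ε⁻¹) ε⁻¹) ∧
        ε < |f x - c - g x|} ≤ ENNReal.ofReal ε}

/-- The metric on `W` metrizing almost basic convergence. -/
noncomputable def dW (f g : ℝ → ℝ) : ℝ := sInf (dSet f g)

/-- Almost basic convergence: every subsequence has a further subsequence along
which the differences `f_n(x) - f_n(y)` converge to `f(x) - f(y)` for all `x, y`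
outside a Lebesgue-null set that may depend on the subsequence. -/
def AlmBasic (F : ℕ → ℝ → ℝ) (f : ℝ → ℝ) : Prop :=
  ∀ φ : ℕ → ℕ, StrictMono φ → ∃ ψ : ℕ → ℕ, StrictMono ψ ∧ ∃ S : Set ℝ,
    volume S = 0 ∧ ∀ x ∉ S, ∀ y ∉ S,
      Tendsto (fun l => F (φ (ψ l)) x - F (φ (ψ l)) y) atTop (nhds (f x - f y))

/-- A bounded monotone function on `ℝ` has bounded variation on `univ`. -/
lemma bv_of_mono_bdd (f : ℝ → ℝ) (hf : Monotone f) (a b : ℝ)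
    (ha : ∀ x, a ≤ f x) (hb : ∀ x, f x ≤ b) : BoundedVariationOn f Set.univ := by
  have : eVariationOn f Set.univ ≤ ENNReal.ofReal (b - a) := by
    rw [eVariationOn]
    refine iSup_le fun p => ?_
    obtain ⟨n, u, hu, -⟩ := p
    have hterm : ∀ i, edist (f (u (i+1))) (f (u i)) = ENNReal.ofReal (f (u (i+1)) - f (u i)) := by
      intro i
      rw [edist_dist, Real.dist_eq, abs_of_nonneg (sub_nonneg.2 (hf (hu (Nat.le_succ i))))]
    simp only [hterm]
    rw [← ENNReal.ofReal_sum_of_nonneg (fun i _ => sub_nonneg.2 (hf (hu (Nat.le_succ i))))]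
    rw [Finset.sum_range_sub (fun i => f (u i))]
    exact ENNReal.ofReal_le_ofReal (by linarith [ha (u 0), hb (u n)])
  exact ne_top_of_le_ne_top ENNReal.ofReal_ne_top this

lemma two_mem_dSet (f g : ℝ → ℝ) : (2 : ℝ) ∈ dSet f g := by
  refine ⟨by norm_num, 0, ?_⟩
  have h2 : ((2 : ℝ) = 0) = False := by simp
  have hsub : {x : ℝ | x ∈ (if (2:ℝ) = 0 then Set.univ else Set.Icc (-(2:ℝ)⁻¹) (2:ℝ)⁻¹) ∧
      (2:ℝ) < |f x - 0 - g x|} ⊆ Set.Icc (-(2:ℝ)⁻¹) (2:ℝ)⁻¹ := by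
    intro x hx
    simpa using hx.1
  calc volume _ ≤ volume (Set.Icc (-(2:ℝ)⁻¹) (2:ℝ)⁻¹) := measure_mono hsub
    _ = ENNReal.ofReal ((2:ℝ)⁻¹ - -(2:ℝ)⁻¹) := Real.volume_Icc
    _ ≤ ENNReal.ofReal 2 := by apply ENNReal.ofReal_le_ofReal; norm_num

lemma dSet_bddBelow (f g : ℝ → ℝ) : BddBelow (dSet f g) := ⟨0, fun _ hε => hε.1⟩

lemma mem_dSet_of_small (f g : ℝ → ℝ) (r : ℝ) (hr : 0 < r) (c : ℝ)
    (h : ∀ x ∈ Set.Icc (-r⁻¹) r⁻¹, |f x - c - g x| ≤ r) : r ∈ dSet f g := by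
  refine ⟨hr.le, c, ?_⟩
  have : {x : ℝ | x ∈ (if r = 0 then Set.univ else Set.Icc (-r⁻¹) r⁻¹) ∧
      r < |f x - c - g x|} = ∅ := by
    ext x
    simp only [Set.mem_setOf_eq, Set.mem_empty_iff_false, iff_false, not_and, not_lt]
    rw [if_neg hr.ne']
    exact h x
  rw [this]
  simp

/-- The metric space `(W, d)` is not complete: there is a `d`-Cauchy sequence in
`W` with no limit in `W`. -/
theorem stmt12 :
    ∃ F : ℕ → ℝ → ℝ, (∀ n, MemW (F n)) ∧
      (∀ ε : ℝ, 0 < ε → ∃ N : ℕ, ∀ m ≥ N, ∀ n ≥ N, dW (F m) (F n) < ε) ∧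
      ¬ ∃ f : ℝ → ℝ, MemW f ∧ Tendsto (fun n => dW (F n) f) atTop (nhds 0) := by
  refine ⟨fun n x => min (max x 0) (n : ℝ), ?_, ?_, ?_⟩
  · -- each F n is in W
    intro n
    refine ⟨?_, ?_, ?_⟩
    · intro x
      exact (((continuous_id.max continuous_const).min continuous_const).continuousWithinAt)
    · refine bv_of_mono_bdd _ ?_ 0 (n : ℝ) ?_ ?_
      · exact (monotone_id.max monotone_const).min monotone_const
      · intro x; exact le_min (le_max_right _ _) (Nat.cast_nonneg n)
      · intro x; exact min_le_right _ _
    · have hev : (fun x => min (max x 0) (n : ℝ)) =ᶠ[atBot] (fun _ => (0 : ℝ)) := by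
        filter_upwards [eventually_le_atBot (0 : ℝ)] with x hx
        rw [max_eq_right hx, min_eq_left (Nat.cast_nonneg n)]
      exact Tendsto.congr' hev.symm tendsto_const_nhds
  · -- Cauchy
    intro ε hε
    refine ⟨⌈2 / ε⌉₊, fun m hm n hn => ?_⟩
    have hhalf : (ε / 2) ∈ dSet (fun x => min (max x 0) (m : ℝ)) (fun x => min (max x 0) (n : ℝ)) := by
      refine mem_dSet_of_small _ _ (ε / 2) (by linarith) 0 ?_
      intro x hx
      have hxle : x ≤ 2 / ε := by
        have : (ε / 2)⁻¹ = 2 / ε := by field_simp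
        simpa [this] using hx.2
      have hmax : max x 0 ≤ 2 / ε := max_le (by linarith) (by positivity)
      have h2ε : 2 / ε ≤ (⌈2 / ε⌉₊ : ℝ) := Nat.le_ceil _
      have hm' : max x 0 ≤ (m : ℝ) :=
        hmax.trans (h2ε.trans (Nat.cast_le.2 hm))
      have hn' : max x 0 ≤ (n : ℝ) :=
        hmax.trans (h2ε.trans (Nat.cast_le.2 hn))
      rw [min_eq_left hm', min_eq_left hn']
      have heq : max x 0 - 0 - max x 0 = 0 := by ring
      rw [heq, abs_zero]
      positivity
    have := csInf_le (dSet_bddBelow _ _) hhalf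
    calc dW _ _ ≤ ε / 2 := this
      _ < ε := by linarith
  · -- no limit
    rintro ⟨f, hfW, hconv⟩
    have hBV : BoundedVariationOn f Set.univ := hfW.2.1
    set V : ℝ := (eVariationOn f Set.univ).toReal with hVdef
    have hVnn : 0 ≤ V := ENNReal.toReal_nonneg
    set M : ℝ := |f 0| + V with hMdef
    have hMnn : 0 ≤ M := by positivity
    have hfbd : ∀ x, |f x| ≤ M := by
      intro x
      have h1 : dist (f x) (f 0) ≤ V := hBV.dist_le (Set.mem_univ x) (Set.mem_univ 0)
      rw [Real.dist_eq] at h1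
      calc |f x| = |f 0 + (f x - f 0)| := by ring_nf
        _ ≤ |f 0| + |f x - f 0| := abs_add_le _ _
        _ ≤ |f 0| + V := by linarith
    set B : ℝ := 2 * M + 10 with hBdef
    have hB10 : 10 ≤ B := by linarith
    set δ : ℝ := B⁻¹ with hδdef
    have hδpos : 0 < δ := by positivity
    have hδle : δ ≤ 1 / 10 := by
      rw [hδdef]
      rw [one_div]
      exact inv_anti₀ (by norm_num) hB10
    -- pick n with n ≥ B and dW (F n) f < δ
    obtain ⟨n, hn1, hn2⟩ :=
      (((hconv.eventually (gt_mem_nhds hδpos)).and (eventually_ge_atTop ⌈B⌉₊)).exists)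
    have hnB : B ≤ (n : ℝ) := (Nat.le_ceil B).trans (Nat.cast_le.2 hn2)
    -- extract a small element of dSet
    obtain ⟨ε, hεmem, hεδ⟩ :=
      exists_lt_of_csInf_lt ⟨2, two_mem_dSet _ _⟩ hn1
    obtain ⟨hε0, c, hvol⟩ := hεmem
    have hεB : ∀ x : ℝ, x ∈ Set.Icc (0:ℝ) B →
        x ∈ (if ε = 0 then Set.univ else Set.Icc (-ε⁻¹) ε⁻¹) := by
      intro x hx
      by_cases h0 : ε = 0
      · simp [h0]
      · rw [if_neg h0]
        have hεpos : 0 < ε := lt_of_le_of_ne hε0 (Ne.symm h0)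
        have hinv : B < ε⁻¹ := by
          calc B = δ⁻¹ := by rw [hδdef, inv_inv]
            _ < ε⁻¹ := by
              apply inv_strictAnti₀ hεpos hεδ
        constructor
        · have : (0:ℝ) < ε⁻¹ := by positivity
          linarith [hx.1]
        · linarith [hx.2]
    -- find good points in unit subintervals of [0, B]
    have find : ∀ u : ℝ, 0 ≤ u → u + 1 ≤ B →
        ∃ x ∈ Set.Icc u (u + 1), |min (max x 0) (n:ℝ) - c - f x| ≤ ε := by
      intro u hu huB
      by_contra hcon
      push_neg at hcon
      have hsub : Set.Icc u (u+1) ⊆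
          {x : ℝ | x ∈ (if ε = 0 then Set.univ else Set.Icc (-ε⁻¹) ε⁻¹) ∧
            ε < |min (max x 0) (n:ℝ) - c - f x|} := by
        intro x hx
        refine ⟨hεB x ⟨hu.trans hx.1, hx.2.trans huB⟩, hcon x hx⟩
      have h1 : ENNReal.ofReal (1:ℝ) ≤ ENNReal.ofReal ε := by
        calc ENNReal.ofReal (1:ℝ) = volume (Set.Icc u (u+1)) := by
              rw [Real.volume_Icc]; norm_num
          _ ≤ _ := measure_mono hsub
          _ ≤ ENNReal.ofReal ε := hvol
      have : (1:ℝ) ≤ ε := by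
        rwa [ENNReal.ofReal_le_ofReal_iff hε0] at h1
      linarith
    obtain ⟨x0, hx0I, hx0⟩ := find 0 le_rfl (by linarith)
    obtain ⟨x1, hx1I, hx1⟩ := find (B - 1) (by linarith) (by linarith)
    have hx00 : 0 ≤ x0 := hx0I.1
    have hx01 : x0 ≤ 1 := by have := hx0I.2; linarith
    have hx1l : B - 1 ≤ x1 := hx1I.1
    have hx1u : x1 ≤ B := by have := hx1I.2; linarith
    have hx0v : min (max x0 0) (n:ℝ) = x0 := by
      rw [max_eq_left hx00, min_eq_left (by linarith)]
    have hx1v : min (max x1 0) (n:ℝ) = x1 := by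
      rw [max_eq_left (by linarith), min_eq_left (by linarith)]
    rw [hx0v] at hx0
    rw [hx1v] at hx1
    have hε1 : ε ≤ 1 := by linarith
    have hcb : |c| ≤ M + 2 := by
      have hceq : c = (x0 - f x0) - (x0 - c - f x0) := by ring
      have h0 : |x0 - f x0| ≤ 1 + M := by
        calc |x0 - f x0| ≤ |x0| + |f x0| := abs_sub _ _
          _ ≤ 1 + M := by
              have h1 : |x0| ≤ 1 := abs_le.2 ⟨by linarith, hx01⟩
              linarith [hfbd x0]
      calc |c| = |(x0 - f x0) - (x0 - c - f x0)| := by rw [← hceq]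
        _ ≤ |x0 - f x0| + |x0 - c - f x0| := abs_sub _ _
        _ ≤ (1 + M) + 1 := by linarith
        _ = M + 2 := by ring
    have hflarge : M + 5 ≤ f x1 := by
      have h1 : x1 - c - f x1 ≤ |x1 - c - f x1| := le_abs_self _
      have hc2 : c ≤ M + 2 := (abs_le.1 hcb).2
      -- f x1 ≥ x1 - c - ε ≥ (B - 1) - (M + 2) - 1 = M + 6
      nlinarith
    have hle : f x1 ≤ M := (le_abs_self _).trans (hfbd x1)
    linarith
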